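/- Let F be a finitely generated free group, α: F → F an injective endomorphism, H ≤ F a finitely generated α-invariant subgroup, and w ∈ F. If there exists n ∈ ℕ with αⁿ(w) ∈ H, then the image of w in the profinite completion of the ascending HNN extension M_α lies in the closure of the image of H. -/

import Mathlib

/-- The index type of finite quotients: finite-index normal subgroups. -/
def FinQuot (G : Type*) [Group G] : Type _ :=
  {N : Subgroup G // N.Normal ∧ N.FiniteIndex}

instance {G : Type*} [Group G] (N : FinQuot G) : N.1.Normal := N.2.1
instance {G : Type*} [Group G] (N : FinQuot G) : N.1.FiniteIndex := N.2.2

instance {G : Type*} [Group G] (N : FinQuot G) : TopologicalSpace (G ⧸ N.1) := ⊥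

/-- The subgroup of compatible families in the product of all finite quotients. -/
def profCompat (G : Type*) [Group G] : Subgroup (Π N : FinQuot G, G ⧸ N.1) where
  carrier := {x | ∀ (N M : FinQuot G) (h : N.1 ≤ M.1),
    QuotientGroup.map N.1 M.1 (MonoidHom.id G) (by simpa using h) (x N) = x M}
  one_mem' := by intro N M h; simp
  mul_mem' := by
    intro a b ha hb N M h
    simp only [Pi.mul_apply, map_mul, ha N M h, hb N M h]
  inv_mem' := by
    intro a ha N M h
    simp only [Pi.inv_apply, map_inv, ha N M h]

/-- The profinite completion of a group, as the inverse limit of its finite quotients. -/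
def ProfComp (G : Type*) [Group G] : Type _ := profCompat G

instance {G : Type*} [Group G] : Group (ProfComp G) :=
  inferInstanceAs (Group (profCompat G))

instance {G : Type*} [Group G] : TopologicalSpace (ProfComp G) :=
  inferInstanceAs (TopologicalSpace {x : Π N : FinQuot G, G ⧸ N.1 // x ∈ profCompat G})

/-- The canonical map from a group to its profinite completion. -/
def toProf (G : Type*) [Group G] : G →* ProfComp G where
  toFun g := ⟨fun N => QuotientGroup.mk g, by
    intro N M h
    simp [QuotientGroup.map_mk]⟩
  map_one' := by apply Subtype.ext; funext N; rfl
  map_mul' a b := by apply Subtype.ext; funext N; rfl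

/-- The pullback of a finite-index normal subgroup along a homomorphism. -/
def pullFQ {Λ Γ : Type*} [Group Λ] [Group Γ] (φ : Λ →* Γ) (N : FinQuot Γ) : FinQuot Λ :=
  ⟨N.1.comap φ, N.2.1.comap φ, ⟨by
    refine ne_zero_of_dvd_ne_zero N.2.2.index_ne_zero ?_
    rw [Subgroup.index_comap]
    exact Subgroup.relIndex_dvd_index_of_normal N.1 φ.range⟩⟩

/-- The induced homomorphism between profinite completions. -/
def profMap {Λ Γ : Type*} [Group Λ] [Group Γ] (φ : Λ →* Γ) :
    ProfComp Λ →* ProfComp Γ where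
  toFun x := ⟨fun N => QuotientGroup.map (pullFQ φ N).1 N.1 φ le_rfl (x.1 (pullFQ φ N)), by
    intro N M h
    obtain ⟨g, hg⟩ := QuotientGroup.mk_surjective (x.1 (pullFQ φ N))
    have hx := x.2 (pullFQ φ N) (pullFQ φ M) (Subgroup.comap_mono h)
    show QuotientGroup.map _ _ _ _
        (QuotientGroup.map _ _ φ _ (x.1 (pullFQ φ N))) =
      QuotientGroup.map _ _ φ _ (x.1 (pullFQ φ M))
    rw [← hx, ← hg]
    rfl⟩
  map_one' := by
    apply Subtype.ext
    funext N
    show QuotientGroup.map _ _ φ _ ((1 : ProfComp Λ).1 (pullFQ φ N)) = _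
    rw [show ((1 : ProfComp Λ).1 (pullFQ φ N)) = 1 from rfl, map_one]
    rfl
  map_mul' a b := by
    apply Subtype.ext
    funext N
    show QuotientGroup.map _ _ _ _ ((a * b).1 (pullFQ φ N)) = _
    have : (a * b).1 (pullFQ φ N) = a.1 (pullFQ φ N) * b.1 (pullFQ φ N) := rfl
    rw [this, map_mul]
    rfl

/-- A group is residually finite if every nontrivial element survives in some finite
quotient. -/
def ResiduallyFinite (G : Type*) [Group G] : Prop :=
  ∀ g : G, g ≠ 1 → ∃ N : Subgroup G, N.Normal ∧ N.FiniteIndex ∧ g ∉ N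

/-- The mapping torus (ascending HNN extension) of an injective endomorphism `α` of a
group `G`: `⟨G, t ∣ t⁻¹ g t = α g⟩`, realized as the HNN extension of `G` along the
isomorphism `G ≃ α.range`. -/
noncomputable def MappingTorus {G : Type*} [Group G] (α : G →* G)
    (hα : Function.Injective ⇑α) : Type _ :=
  HNNExtension G ⊤ α.range (Subgroup.topEquiv.trans (MonoidHom.ofInjective hα))

noncomputable instance {G : Type*} [Group G] (α : G →* G) (hα : Function.Injective ⇑α) :
    Group (MappingTorus α hα) :=
  inferInstanceAs (Group (HNNExtension G ⊤ α.range
    (Subgroup.topEquiv.trans (MonoidHom.ofInjective hα))))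

/-- The canonical embedding of the base group into the mapping torus. -/
noncomputable def MappingTorus.of {G : Type*} [Group G] (α : G →* G)
    (hα : Function.Injective ⇑α) : G →* MappingTorus α hα :=
  HNNExtension.of

/-- The stable letter of the mapping torus. -/
noncomputable def MappingTorus.t {G : Type*} [Group G] (α : G →* G)
    (hα : Function.Injective ⇑α) : MappingTorus α hα :=
  HNNExtension.t

/-- The induced endomorphism of the profinite completion, as a monoid endomorphism
(so that it can be iterated). -/
def profEnd {G : Type*} [Group G] (α : G →* G) : Monoid.End (ProfComp G) :=
  profMap α

/-- The eventual image `P = ⋂ₙ α̂ⁿ(Ĝ)` of the induced endomorphism `α̂` of the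
profinite completion. -/
def profEventualImage {G : Type*} [Group G] (α : G →* G) : Subgroup (ProfComp G) :=
  ⨅ n : ℕ, Subgroup.map (profEnd α ^ n) ⊤

/-! ### Auxiliary lemmas -/

/-- In a finite group, if conjugation by `q` maps `S` into `S`, then any element whose
`n`-fold conjugate by `q` lies in `S` already lies in `S`. -/
theorem aux_conj_mem_of_pow_conj_mem {Q : Type*} [Group Q] [Finite Q] (S : Subgroup Q)
    (q : Q) (hq : ∀ s ∈ S, q * s * q⁻¹ ∈ S) :
    ∀ (n : ℕ) (x : Q), q ^ n * x * (q ^ n)⁻¹ ∈ S → x ∈ S := by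
  have key : ∀ s : Q, q * s * q⁻¹ ∈ S → s ∈ S := by
    have hmap : S.map (MulAut.conj q).toMonoidHom = S := by
      refine Subgroup.eq_of_le_of_card_ge ?_ ?_
      · rintro _ ⟨s, hs, rfl⟩
        exact hq s hs
      · exact (Nat.card_congr (Subgroup.equivMapOfInjective S
          (MulAut.conj q).toMonoidHom (MulAut.conj q).injective).toEquiv).le
    intro s hs
    rw [← hmap] at hs
    obtain ⟨s', hs', heq⟩ := hs
    have : s' = s := (MulAut.conj q).injective heq
    exact this ▸ hs'
  intro n
  induction n with
  | zero => intro x hx; simpa using hx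
  | succ n ih =>
    intro x hx
    refine ih x (key _ ?_)
    have : q * (q ^ n * x * (q ^ n)⁻¹) * q⁻¹ = q ^ (n + 1) * x * (q ^ (n + 1))⁻¹ := by
      group
    rw [this]
    exact hx

/-- The basic conjugation relation in the mapping torus: `t f t⁻¹ = α f`. -/
theorem aux_torus_conj {ι : Type} (α : FreeGroup ι →* FreeGroup ι)
    (hα : Function.Injective ⇑α) (f : FreeGroup ι) :
    MappingTorus.t α hα * MappingTorus.of α hα f * (MappingTorus.t α hα)⁻¹ =
      MappingTorus.of α hα (α f) := by
  have key := (HNNExtension.equiv_eq_conj (G := FreeGroup ι) (A := ⊤) (B := α.range)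
    (φ := Subgroup.topEquiv.trans (MonoidHom.ofInjective hα)) ⟨f, trivial⟩).symm
  have h2 : (((Subgroup.topEquiv.trans (MonoidHom.ofInjective hα))
      (⟨f, trivial⟩ : (⊤ : Subgroup (FreeGroup ι)))) : FreeGroup ι) = α f :=
    MonoidHom.ofInjective_apply hα
  rw [← h2]
  exact key

theorem aux_torus_conj_pow {ι : Type} (α : FreeGroup ι →* FreeGroup ι)
    (hα : Function.Injective ⇑α) (n : ℕ) (f : FreeGroup ι) :
    MappingTorus.t α hα ^ n * MappingTorus.of α hα f * (MappingTorus.t α hα ^ n)⁻¹ =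
      MappingTorus.of α hα ((⇑α)^[n] f) := by
  induction n with
  | zero => simp
  | succ n ih =>
    rw [pow_succ, Function.iterate_succ_apply', ← aux_torus_conj α hα, ← ih]
    group

/-- Infima of normal subgroups are normal. -/
theorem aux_normal_iInf {G : Type*} [Group G] {κ : Sort*} {f : κ → Subgroup G}
    (hf : ∀ i, (f i).Normal) : (⨅ i, f i).Normal := by
  constructor
  intro x hx g
  rw [Subgroup.mem_iInf] at hx ⊢
  exact fun i => (hf i).conj_mem x (hx i) g

/-- Let `F` be a finitely generated free group, `α : F → F` an injective endomorphism,
`H` a finitely generated `α`-invariant subgroup and `w ∈ F`.  If `αⁿ(w) ∈ H` for some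
`n`, then the image of `w` in the profinite completion of the mapping torus `M_α` lies
in the closure of the image of `H`. -/
theorem mem_closure_image_of_iterate_mem {ι : Type} [Finite ι]
    (α : FreeGroup ι →* FreeGroup ι) (hα : Function.Injective ⇑α)
    (H : Subgroup (FreeGroup ι)) (hHfg : H.FG) (hHinv : ∀ h ∈ H, α h ∈ H)
    (w : FreeGroup ι) (hn : ∃ n : ℕ, (⇑α)^[n] w ∈ H) :
    toProf (MappingTorus α hα) (MappingTorus.of α hα w) ∈
      closure (Set.range fun h : H =>
        toProf (MappingTorus α hα) (MappingTorus.of α hα (h : FreeGroup ι))) := by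
  obtain ⟨n, hwn⟩ := hn
  set M := MappingTorus α hα with hM
  set k : FreeGroup ι →* M := MappingTorus.of α hα with hk
  set τ : M := MappingTorus.t α hα with hτ
  -- Step 1: in every finite quotient of `M`, the image of `w` lies in the image of `H`.
  have key : ∀ N : FinQuot M, ∃ h ∈ H,
      (QuotientGroup.mk (k h) : M ⧸ N.1) = QuotientGroup.mk (k w) := by
    intro N
    set π : M →* M ⧸ N.1 := QuotientGroup.mk' N.1 with hπ
    set S : Subgroup (M ⧸ N.1) := (H.map k).map π with hS
    have hq : ∀ s ∈ S, π τ * s * (π τ)⁻¹ ∈ S := by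
      rintro _ ⟨_, ⟨h, hh, rfl⟩, rfl⟩
      have : π τ * π (k h) * (π τ)⁻¹ = π (k (α h)) := by
        rw [← map_inv, ← map_mul, ← map_mul, aux_torus_conj α hα]
      rw [this]
      exact ⟨k (α h), ⟨α h, hHinv h hh, rfl⟩, rfl⟩
    have hx : π τ ^ n * π (k w) * (π τ ^ n)⁻¹ ∈ S := by
      have : π τ ^ n * π (k w) * (π τ ^ n)⁻¹ = π (k ((⇑α)^[n] w)) := by
        rw [← map_pow, ← map_inv, ← map_mul, ← map_mul, aux_torus_conj_pow α hα]
      rw [this]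
      exact ⟨k ((⇑α)^[n] w), ⟨(⇑α)^[n] w, hwn, rfl⟩, rfl⟩
    obtain ⟨_, ⟨h, hh, rfl⟩, hm⟩ :=
      aux_conj_mem_of_pow_conj_mem S (π τ) hq n (π (k w)) hx
    exact ⟨h, hh, hm⟩
  -- Step 2: deduce membership in the closure.
  refine closure_subtype.mpr ?_
  rw [mem_closure_iff]
  intro V hV hxV
  obtain ⟨I, u, hu, hsub⟩ := isOpen_pi_iff.1 hV _ hxV
  set K : Subgroup M := ⨅ i ∈ I, (i : FinQuot M).1 with hK
  have hKn : K.Normal := by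
    refine aux_normal_iInf fun i => aux_normal_iInf fun _ => i.2.1
  have hKf : K.FiniteIndex :=
    Subgroup.finiteIndex_iInf' _ fun i _ => i.2.2
  obtain ⟨h, hh, hhw⟩ := key ⟨K, hKn, hKf⟩
  refine ⟨(toProf M (k h)).1, hsub fun i hi => ?_,
    Set.mem_image_of_mem _ ⟨⟨h, hh⟩, rfl⟩⟩
  have hle : K ≤ i.1 := iInf₂_le i hi
  have : (QuotientGroup.mk (k h) : M ⧸ i.1) = QuotientGroup.mk (k w) := by
    rw [QuotientGroup.eq] at hhw ⊢
    exact hle hhw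
  show (QuotientGroup.mk (k h) : M ⧸ i.1) ∈ u i
  rw [this]
  exact (hu i hi).2
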